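/- In the construction of A, if (α(x),α(x+1)) ∈ B_R then p_R(α(x)) + p_R(α(x+1)) = p_R(F̃(α)(x+1)) + p_R(F̃(α)(x+2)); and if (α(x−1),α(x)) ∉ B_R and (α(x),α(x+1)) ∉ B_R then p_R(α(x)) = p_R(F̃(α)(x+1)). -/
import Mathlib


open scoped Classical

noncomputable section

/-- Heavy-particle part of a state: `p_C(q) = 2·sR·(q / (2·sR))`. -/
def pC (sR q : ℕ) : ℕ := 2 * sR * (q / (2 * sR))

/-- Light-particle part of a state: `p_R(q) = q mod (2·sR)`. -/
def pR (sR q : ℕ) : ℕ := q % (2 * sR)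

/-- All heavy particles `C̃ = {2k·sR : 0 ≤ k ≤ 2sC−1}`. -/
def Ctil (sC sR : ℕ) : Set ℕ := {c | ∃ k < 2 * sC, c = 2 * k * sR}

/-- All light particles `R̃ = {0,…,2sR−1}`. -/
def Rtil (sR : ℕ) : Set ℕ := {r | r < 2 * sR}

/-- `Ĉ = {2k·sR : 0 ≤ k ≤ sC−1}`. -/
def Chat (sC sR : ℕ) : Set ℕ := {c | ∃ k < sC, c = 2 * k * sR}

/-- `Č = {2(k+sC)·sR : 0 ≤ k ≤ sC−1}`. -/
def Ccheck (sC sR : ℕ) : Set ℕ := {c | ∃ k < sC, c = 2 * (k + sC) * sR}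

/-- `R̂ = {0,…,sR−1}`. -/
def Rhat (sR : ℕ) : Set ℕ := {r | r < sR}

/-- `Ř = {sR,…,2sR−1}`. -/
def Rcheck (sR : ℕ) : Set ℕ := {r | sR ≤ r ∧ r < 2 * sR}

/-- Balanced pair of states w.r.t. heavy particles. -/
def BC (sC sR q1 q2 : ℕ) : Prop :=
  pC sR q1 ∈ Chat sC sR ∧ pC sR q2 ∈ Ccheck sC sR ∧
    pC sR q1 + pC sR q2 = 2 * (2 * sC - 1) * sR

/-- Balanced pair of states w.r.t. light particles. -/
def BR (sR q1 q2 : ℕ) : Prop :=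
  pR sR q1 ∈ Rhat sR ∧ pR sR q2 ∈ Rcheck sR ∧
    pR sR q1 + pR sR q2 = 2 * sR - 1

/-- `φ̂_C : C → Ĉ` built from an arbitrary bijection `φC` of `C = Fin sC`. -/
def phatC (sC sR : ℕ) (φC : Fin sC ≃ Fin sC) (c : Fin sC) : ℕ := 2 * (φC c : ℕ) * sR

/-- `φ̂_R : R → R̂` built from an arbitrary bijection `φR` of `R = Fin sR`. -/
def phatR (sR : ℕ) (φR : Fin sR ≃ Fin sR) (r : Fin sR) : ℕ := (φR r : ℕ)

/-- `φ̌_C(c) = 2(2sC−1)sR − φ̂_C(c)`. -/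
def pcheckC (sC sR : ℕ) (φC : Fin sC ≃ Fin sC) (c : Fin sC) : ℕ :=
  2 * (2 * sC - 1) * sR - phatC sC sR φC c

/-- `φ̌_R(r) = 2sR−1 − φ̂_R(r)`. -/
def pcheckR (sR : ℕ) (φR : Fin sR ≃ Fin sR) (r : Fin sR) : ℕ :=
  2 * sR - 1 - phatR sR φR r

/-- `φ̂(c,r) = φ̂_C(c) + φ̂_R(r)`. -/
def phat (sC sR : ℕ) (φC : Fin sC ≃ Fin sC) (φR : Fin sR ≃ Fin sR)
    (q : Fin sC × Fin sR) : ℕ := phatC sC sR φC q.1 + phatR sR φR q.2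

/-- `φ̌(c,r) = φ̌_C(c) + φ̌_R(r)`. -/
def pcheck (sC sR : ℕ) (φC : Fin sC ≃ Fin sC) (φR : Fin sR ≃ Fin sR)
    (q : Fin sC × Fin sR) : ℕ := pcheckC sC sR φC q.1 + pcheckR sR φR q.2

/-- `Q̂ = {ĉ + r̂ : ĉ ∈ Ĉ, r̂ ∈ R̂}`. -/
def Qhat (sC sR : ℕ) : Set ℕ := {q | ∃ c ∈ Chat sC sR, ∃ r ∈ Rhat sR, q = c + r}

/-- `Q̌ = {č + ř : č ∈ Č, ř ∈ Ř}`. -/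
def Qcheck (sC sR : ℕ) : Set ℕ := {q | ∃ c ∈ Ccheck sC sR, ∃ r ∈ Rcheck sR, q = c + r}

/-- `φ̂_C⁻¹` applied to a heavy particle (given as a natural number). -/
def decC (sC sR : ℕ) [NeZero sC] (φC : Fin sC ≃ Fin sC) (c : ℕ) : Fin sC :=
  φC.symm ⟨(c / (2 * sR)) % sC, Nat.mod_lt _ (Nat.pos_of_ne_zero (NeZero.ne sC))⟩

/-- `φ̂_R⁻¹` applied to a light particle (given as a natural number). -/
def decR (sR : ℕ) [NeZero sR] (φR : Fin sR ≃ Fin sR) (r : ℕ) : Fin sR :=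
  φR.symm ⟨r % sR, Nat.mod_lt _ (Nat.pos_of_ne_zero (NeZero.ne sR))⟩

/-- The three-case local function `f̃` of the 4-neighbor RNCCA `A`. -/
def ftil (sC sR : ℕ) [NeZero sC] [NeZero sR] (φC : Fin sC ≃ Fin sC) (φR : Fin sR ≃ Fin sR)
    (f : Fin sC × Fin sR → Fin sC × Fin sR) (qm2 qm1 q0 q1 : ℕ) : ℕ :=
  if BR sR qm1 q0 ∧ BC sC sR q0 q1 then
    phat sC sR φC φR (f (decC sC sR φC (pC sR q0), decR sR φR (pR sR qm1)))
  else if BR sR qm2 qm1 ∧ BC sC sR qm1 q0 then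
    pcheck sC sR φC φR (f (decC sC sR φC (pC sR qm1), decR sR φR (pR sR qm2)))
  else pC sR q0 + pR sR qm1

/-- Global function `F̃` of `A` with neighborhood `(−2,−1,0,1)`. -/
def Ftil (sC sR : ℕ) [NeZero sC] [NeZero sR] (φC : Fin sC ≃ Fin sC) (φR : Fin sR ≃ Fin sR)
    (f : Fin sC × Fin sR → Fin sC × Fin sR) (α : ℤ → ℕ) (x : ℤ) : ℕ :=
  ftil sC sR φC φR f (α (x - 2)) (α (x - 1)) (α x) (α (x + 1))

/-- The encoding `τ̃`: `τ̃(α)(2x) = φ̂(α(x))`, `τ̃(α)(2x+1) = φ̌(α(x))`. -/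
def tenc (sC sR : ℕ) (φC : Fin sC ≃ Fin sC) (φR : Fin sR ≃ Fin sR)
    (α : ℤ → Fin sC × Fin sR) (y : ℤ) : ℕ :=
  if Even y then phat sC sR φC φR (α (y / 2)) else pcheck sC sR φC φR (α ((y - 1) / 2))

/-- Global function of the 2-neighbor PCA `P` with neighborhood `(0,−1)`. -/
def FP {C R : Type*} (f : C × R → C × R) (α : ℤ → C × R) (x : ℤ) : C × R :=
  f ((α x).1, (α (x - 1)).2)

end


lemma pR_phat' (sC sR : ℕ) (φC : Fin sC ≃ Fin sC) (φR : Fin sR ≃ Fin sR)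
    (q : Fin sC × Fin sR) : pR sR (phat sC sR φC φR q) = (φR q.2 : ℕ) := by
  have h : (φR q.2 : ℕ) < sR := (φR q.2).isLt
  simp only [pR, phat, phatC, phatR]
  rw [show 2 * (φC q.1 : ℕ) * sR = (φC q.1 : ℕ) * (2 * sR) by ring, Nat.add_comm,
    Nat.add_mul_mod_self_right, Nat.mod_eq_of_lt (by omega)]

lemma pR_pcheck' (sC sR : ℕ) (φC : Fin sC ≃ Fin sC) (φR : Fin sR ≃ Fin sR)
    (q : Fin sC × Fin sR) :
    pR sR (pcheck sC sR φC φR q) = 2 * sR - 1 - (φR q.2 : ℕ) := by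
  have hr : (φR q.2 : ℕ) < sR := (φR q.2).isLt
  simp only [pR, pcheck, pcheckC, pcheckR, phatC, phatR]
  have h1 : 2 * (2 * sC - 1) * sR - 2 * (φC q.1 : ℕ) * sR
      = (2 * sC - 1 - (φC q.1 : ℕ)) * (2 * sR) := by
    rw [show 2 * (2 * sC - 1) * sR = (2 * sC - 1) * (2 * sR) by ring,
      show 2 * (φC q.1 : ℕ) * sR = (φC q.1 : ℕ) * (2 * sR) by ring, ← Nat.sub_mul]
  rw [h1, Nat.add_comm, Nat.add_mul_mod_self_right, Nat.mod_eq_of_lt (by omega)]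

lemma pR_third (sR q0 qm1 : ℕ) : pR sR (pC sR q0 + pR sR qm1) = pR sR qm1 := by
  simp only [pR, pC]
  rw [Nat.mul_add_mod, Nat.mod_mod_of_dvd _ dvd_rfl]

theorem stmt9 (sC sR : ℕ) [NeZero sC] [NeZero sR] (φC : Fin sC ≃ Fin sC)
    (φR : Fin sR ≃ Fin sR) (f : Fin sC × Fin sR → Fin sC × Fin sR)
    (hf : Function.Injective f) (α : ℤ → ℕ)
    (hα : ∀ x : ℤ, α x < 4 * sC * sR) (x : ℤ) :
    (BR sR (α x) (α (x + 1)) →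
      pR sR (α x) + pR sR (α (x + 1)) =
        pR sR (Ftil sC sR φC φR f α (x + 1)) + pR sR (Ftil sC sR φC φR f α (x + 2))) ∧
    (¬ BR sR (α (x - 1)) (α x) → ¬ BR sR (α x) (α (x + 1)) →
      pR sR (α x) = pR sR (Ftil sC sR φC φR f α (x + 1))) := by
  have e1 : Ftil sC sR φC φR f α (x + 1) =
      ftil sC sR φC φR f (α (x - 1)) (α x) (α (x + 1)) (α (x + 2)) := by
    show ftil _ _ _ _ _ (α (x + 1 - 2)) (α (x + 1 - 1)) _ (α (x + 1 + 1)) = _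
    rw [show x + 1 - 2 = x - 1 by ring, show x + 1 - 1 = x by ring,
      show x + 1 + 1 = x + 2 by ring]
  have e2 : Ftil sC sR φC φR f α (x + 2) =
      ftil sC sR φC φR f (α x) (α (x + 1)) (α (x + 2)) (α (x + 3)) := by
    show ftil _ _ _ _ _ (α (x + 2 - 2)) (α (x + 2 - 1)) _ (α (x + 2 + 1)) = _
    rw [show x + 2 - 2 = x by ring, show x + 2 - 1 = x + 1 by ring,
      show x + 2 + 1 = x + 3 by ring]
  constructor
  · intro hBR
    obtain ⟨hr1, hr2, hsum⟩ := hBR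
    simp only [Rhat, Rcheck, Set.mem_setOf_eq] at hr1 hr2
    have hno : ¬ (BR sR (α (x + 1)) (α (x + 2)) ∧ BC sC sR (α (x + 2)) (α (x + 3))) := by
      rintro ⟨⟨h1, -, -⟩, -⟩
      simp only [Rhat, Set.mem_setOf_eq] at h1
      omega
    by_cases hBC : BC sC sR (α (x + 1)) (α (x + 2))
    · have E1 : pR sR (Ftil sC sR φC φR f α (x + 1)) =
          (φR (f (decC sC sR φC (pC sR (α (x + 1))), decR sR φR (pR sR (α x)))).2 : ℕ) := by
        rw [e1, ftil, if_pos ⟨⟨hr1, hr2, hsum⟩, hBC⟩, pR_phat']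
      have E2 : pR sR (Ftil sC sR φC φR f α (x + 2)) = 2 * sR - 1 -
          (φR (f (decC sC sR φC (pC sR (α (x + 1))), decR sR φR (pR sR (α x)))).2 : ℕ) := by
        rw [e2, ftil, if_neg hno, if_pos ⟨⟨hr1, hr2, hsum⟩, hBC⟩, pR_pcheck']
      rw [E1, E2]
      have := (φR (f (decC sC sR φC (pC sR (α (x + 1))),
        decR sR φR (pR sR (α x)))).2).isLt
      omega
    · have E1 : pR sR (Ftil sC sR φC φR f α (x + 1)) = pR sR (α x) := by
        rw [e1, ftil, if_neg (fun h => hBC h.2), if_neg, pR_third]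
        rintro ⟨⟨-, h2, -⟩, -⟩
        simp only [Rcheck, Set.mem_setOf_eq] at h2
        omega
      have E2 : pR sR (Ftil sC sR φC φR f α (x + 2)) = pR sR (α (x + 1)) := by
        rw [e2, ftil, if_neg hno, if_neg (fun h => hBC h.2), pR_third]
      rw [E1, E2]
  · intro h1 h2
    rw [e1, ftil, if_neg (fun h => h2 h.1), if_neg (fun h => h1 h.1), pR_third]
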